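/- Let σ > 1, n ≥ 1, b ∈ ℝ, and let j, k ∈ ℕ. There exist constants C > 0 and c > 0 such that for all t > 0 and all ξ ∈ ℝⁿ with ‖ξ‖^(2σ) ≥ 5, the k-th iterated derivative within U of the function ξ ↦ λ₁(ξ) e^{λ₂(ξ)t} λ₂(ξ)^j ‖ξ‖^b / (λ₁(ξ) − λ₂(ξ)) satisfies ‖D^k(·)(ξ)‖ ≤ C e^{−ct} ‖ξ‖^{2σj + b − 2σ − k}. -/

import Mathlib

noncomputable section

variable {n : ℕ}

/-- `r(ξ) = ‖ξ‖^(2σ)`. -/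
def rr (σ : ℝ) (ξ : EuclideanSpace ℝ (Fin n)) : ℝ := ‖ξ‖ ^ (2 * σ)

/-- First (real) characteristic root `λ₁(ξ) = (−r(ξ) + √(r(ξ)² − 4r(ξ)))/2`. -/
def lam1R (σ : ℝ) (ξ : EuclideanSpace ℝ (Fin n)) : ℝ :=
  (-(rr σ ξ) + Real.sqrt ((rr σ ξ) ^ 2 - 4 * rr σ ξ)) / 2

/-- Second (real) characteristic root `λ₂(ξ) = (−r(ξ) − √(r(ξ)² − 4r(ξ)))/2`. -/
def lam2R (σ : ℝ) (ξ : EuclideanSpace ℝ (Fin n)) : ℝ :=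
  (-(rr σ ξ) - Real.sqrt ((rr σ ξ) ^ 2 - 4 * rr σ ξ)) / 2


open scoped ContDiff

set_option maxHeartbeats 1000000
set_option synthInstance.maxHeartbeats 1000000

namespace S10

lemma natCast_le_infty (i : ℕ) : (i : WithTop ℕ∞) ≤ ∞ := by exact_mod_cast le_top

/-- the left endpoint of the 1-D domain -/
def aa (σ : ℝ) : ℝ := (4:ℝ) ^ (σ⁻¹)

def Om (σ : ℝ) : Set ℝ := Set.Ioi (aa σ)

variable {σ : ℝ}

lemma isOpen_Om : IsOpen (Om σ) := isOpen_Ioi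

lemma uniqueDiffOn_Om : UniqueDiffOn ℝ (Om σ) := uniqueDiffOn_Ioi _

lemma one_lt_aa (hσ : 1 < σ) : 1 < aa σ := by
  have hσ0 : 0 < σ := lt_trans one_pos hσ
  exact (Real.one_lt_rpow_iff_of_pos (by norm_num)).2 (Or.inl ⟨by norm_num, by positivity⟩)

lemma Om_one_lt (hσ : 1 < σ) {s : ℝ} (hs : s ∈ Om σ) : 1 < s :=
  lt_trans (one_lt_aa hσ) hs

lemma Om_pos (hσ : 1 < σ) {s : ℝ} (hs : s ∈ Om σ) : 0 < s :=
  lt_trans one_pos (Om_one_lt hσ hs)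

lemma aa_rpow (hσ : 1 < σ) : (aa σ) ^ σ = 4 := by
  have hσ0 : σ ≠ 0 := by positivity
  rw [aa, ← Real.rpow_mul (by norm_num), inv_mul_cancel₀ hσ0, Real.rpow_one]

lemma Om_four_lt (hσ : 1 < σ) {s : ℝ} (hs : s ∈ Om σ) : 4 < s ^ σ := by
  have := Real.rpow_lt_rpow (le_of_lt (lt_trans one_pos (one_lt_aa hσ))) hs
    (lt_trans one_pos hσ)
  rwa [aa_rpow hσ] at this

lemma mem_Om_of_rpow (hσ : 1 < σ) {x : ℝ} (hx : 0 < x) (h : 4 < x ^ σ) : x ∈ Om σ := by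
  by_contra hc
  have hle : x ≤ aa σ := not_lt.1 hc
  have h1 : x ^ σ ≤ (aa σ) ^ σ :=
    Real.rpow_le_rpow (le_of_lt hx) hle (le_of_lt (lt_trans one_pos hσ))
  rw [aa_rpow hσ] at h1
  linarith

lemma Om_spow_pos (hσ : 1 < σ) {s : ℝ} (hs : s ∈ Om σ) : 0 < s ^ σ :=
  Real.rpow_pos_of_pos (Om_pos hσ hs) σ

/-- generic formula for iterated derivatives of `y ↦ (c + d y) ^ β` on an open set where
`c + d y > 0`. -/
lemma iteratedDerivWithin_affine_rpow (β c d : ℝ) {V : Set ℝ} (hV : IsOpen V)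
    (hpos : ∀ y ∈ V, 0 < c + d * y) (i : ℕ) :
    ∀ y ∈ V, iteratedDerivWithin i (fun y => (c + d * y) ^ β) V y
      = d ^ i * (∏ m ∈ Finset.range i, (β - m)) * (c + d * y) ^ (β - i) := by
  induction i with
  | zero =>
    intro y hy
    simp
  | succ i IH =>
    intro y hy
    rw [iteratedDerivWithin_succ,
      derivWithin_congr (fun z hz => IH z hz) (IH y hy)]
    have h1 : HasDerivAt (fun z : ℝ => c + d * z) d y := by
      simpa using ((hasDerivAt_id y).const_mul d).const_add c
    have h2 : HasDerivAt (fun x : ℝ => x ^ (β - i)) ((β - i) * (c + d*y) ^ (β - i - 1))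
        (c + d*y) := Real.hasDerivAt_rpow_const (Or.inl (hpos y hy).ne')
    have h3 : HasDerivAt (fun z : ℝ => (c + d*z) ^ (β - i))
        ((β - i) * (c + d*y) ^ (β - i - 1) * d) y := by have := h2.comp y h1; exact this
    have h4 : HasDerivAt (fun z : ℝ => d ^ i * (∏ m ∈ Finset.range i, (β - m)) *
        (c + d*z) ^ (β - i))
        (d ^ i * (∏ m ∈ Finset.range i, (β - m)) * ((β - i) * (c + d*y) ^ (β - i - 1) * d)) y :=
      h3.const_mul _
    rw [h4.hasDerivWithinAt.derivWithin (hV.uniqueDiffOn.uniqueDiffWithinAt hy),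
      Finset.prod_range_succ,
      show β - ((i+1 : ℕ) : ℝ) = β - i - 1 by push_cast; ring]
    ring


/-- 1-D symbol class on `Om σ`: `i`-th derivative bounded by `C s^(α-i)` for `s^σ ≥ 5`. -/
def Sy (σ α : ℝ) (u : ℝ → ℝ) : Prop :=
  ContDiffOn ℝ ∞ u (Om σ) ∧
  ∀ i : ℕ, ∃ C : ℝ, 0 < C ∧ ∀ s ∈ Om σ, 5 ≤ s ^ σ →
    |iteratedDerivWithin i u (Om σ) s| ≤ C * s ^ (α - i)

/-- time-dependent symbol class with exponential decay. -/
def DSy (σ α : ℝ) (u : ℝ → ℝ → ℝ) : Prop :=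
  (∀ t : ℝ, 0 < t → ContDiffOn ℝ ∞ (u t) (Om σ)) ∧
  ∀ i : ℕ, ∃ C ε : ℝ, 0 < C ∧ 0 < ε ∧ ∀ t : ℝ, 0 < t → ∀ s ∈ Om σ, 5 ≤ s ^ σ →
    |iteratedDerivWithin i (u t) (Om σ) s| ≤ C * s ^ (α - i) * Real.exp (-(ε * (s ^ σ * t)))

variable {α β α' : ℝ} {u v : ℝ → ℝ}

lemma Sy.upto (h : Sy σ α u) (hσ : 1 < σ) (k : ℕ) :
    ∃ C : ℝ, 0 < C ∧ ∀ i ≤ k, ∀ s ∈ Om σ, 5 ≤ s ^ σ →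
      |iteratedDerivWithin i u (Om σ) s| ≤ C * s ^ (α - i) := by
  induction k with
  | zero =>
    obtain ⟨C, hC, hb⟩ := h.2 0
    exact ⟨C, hC, fun i hi s hs h5 => by obtain rfl := Nat.le_zero.mp hi; exact hb s hs h5⟩
  | succ k IH =>
    obtain ⟨C, hC, hb⟩ := IH
    obtain ⟨C', hC', hb'⟩ := h.2 (k + 1)
    refine ⟨max C C', lt_max_of_lt_left hC, fun i hi s hs h5 => ?_⟩
    have hpow : (0:ℝ) ≤ s ^ (α - i) := Real.rpow_nonneg (le_of_lt (Om_pos hσ hs)) _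
    rcases Nat.lt_succ_iff_lt_or_eq.mp (Nat.lt_succ_of_le hi) with hlt | rfl
    · exact le_trans (hb i (Nat.lt_succ_iff.mp hlt) s hs h5)
        (mul_le_mul_of_nonneg_right (le_max_left _ _) hpow)
    · exact le_trans (hb' s hs h5) (mul_le_mul_of_nonneg_right (le_max_right _ _) hpow)

lemma DSy.upto {w : ℝ → ℝ → ℝ} (h : DSy σ α w) (hσ : 1 < σ) (k : ℕ) :
    ∃ C ε : ℝ, 0 < C ∧ 0 < ε ∧ ∀ i ≤ k, ∀ t : ℝ, 0 < t → ∀ s ∈ Om σ, 5 ≤ s ^ σ →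
      |iteratedDerivWithin i (w t) (Om σ) s| ≤ C * s ^ (α - i) * Real.exp (-(ε * (s ^ σ * t))) := by
  induction k with
  | zero =>
    obtain ⟨C, ε, hC, hε, hb⟩ := h.2 0
    exact ⟨C, ε, hC, hε, fun i hi t ht s hs h5 => by
      obtain rfl := Nat.le_zero.mp hi; exact hb t ht s hs h5⟩
  | succ k IH =>
    obtain ⟨C, ε, hC, hε, hb⟩ := IH
    obtain ⟨C', ε', hC', hε', hb'⟩ := h.2 (k + 1)
    refine ⟨max C C', min ε ε', lt_max_of_lt_left hC, lt_min hε hε',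
      fun i hi t ht s hs h5 => ?_⟩
    have hsp := Om_pos hσ hs
    have hpow : (0:ℝ) ≤ s ^ (α - i) := Real.rpow_nonneg (le_of_lt hsp) _
    have hrt : 0 ≤ s ^ σ * t := mul_nonneg (le_of_lt (Om_spow_pos hσ hs)) (le_of_lt ht)
    rcases Nat.lt_succ_iff_lt_or_eq.mp (Nat.lt_succ_of_le hi) with hlt | rfl
    · refine le_trans (hb i (Nat.lt_succ_iff.mp hlt) t ht s hs h5) ?_
      gcongr
      · exact le_max_left _ _
      · exact min_le_left ε ε'
    · refine le_trans (hb' t ht s hs h5) ?_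
      gcongr
      · exact le_max_right _ _
      · exact min_le_right ε ε'

lemma Sy.congr (h : Sy σ α u) (huv : Set.EqOn u v (Om σ)) : Sy σ α v := by
  refine ⟨h.1.congr (fun x hx => (huv hx).symm), fun i => ?_⟩
  obtain ⟨C, hC, hb⟩ := h.2 i
  refine ⟨C, hC, fun s hs h5 => ?_⟩
  rw [← iteratedDerivWithin_congr huv hs]
  exact hb s hs h5

lemma Sy.of_eq (h : Sy σ α u) (hα : α = α') (huv : Set.EqOn u v (Om σ)) : Sy σ α' v := by
  subst hα; exact h.congr huv

lemma DSy.of_eq {w w' : ℝ → ℝ → ℝ} (h : DSy σ α w) (hα : α = α')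
    (huv : ∀ t : ℝ, 0 < t → Set.EqOn (w t) (w' t) (Om σ)) : DSy σ α' w' := by
  subst hα
  refine ⟨fun t ht => (h.1 t ht).congr (fun x hx => (huv t ht hx).symm), fun i => ?_⟩
  obtain ⟨C, ε, hC, hε, hb⟩ := h.2 i
  refine ⟨C, ε, hC, hε, fun t ht s hs h5 => ?_⟩
  rw [← iteratedDerivWithin_congr (huv t ht) hs]
  exact hb t ht s hs h5

lemma sy_const (hσ : 1 < σ) (c : ℝ) : Sy σ 0 (fun _ => c) := by
  refine ⟨contDiffOn_const, fun i => ?_⟩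
  refine ⟨|c| + 1, by positivity, fun s hs h5 => ?_⟩
  have hsp : (0:ℝ) < s := Om_pos hσ hs
  cases i with
  | zero =>
    simp only [iteratedDerivWithin_zero, Nat.cast_zero, sub_zero, Real.rpow_zero, mul_one]
    linarith [le_abs_self c, abs_nonneg c, neg_abs_le c, abs_abs c]
  | succ i =>
    have hz : ‖iteratedFDerivWithin ℝ (i+1) (fun _ : ℝ => c) (Om σ) s‖ = 0 := by
      rw [show iteratedFDerivWithin ℝ (i+1) (fun _ : ℝ => c) (Om σ) = 0 from iteratedFDerivWithin_const_of_ne (Nat.succ_ne_zero i) c (Om σ)]; simp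
    rw [← Real.norm_eq_abs, ← norm_iteratedFDerivWithin_eq_norm_iteratedDerivWithin, hz]
    positivity

lemma sy_rpow (hσ : 1 < σ) (β : ℝ) : Sy σ β (fun s => s ^ β) := by
  constructor
  · exact fun s hs =>
      (Real.contDiffAt_rpow_const_of_ne (ne_of_gt (Om_pos hσ hs))).contDiffWithinAt
  · intro i
    refine ⟨|∏ m ∈ Finset.range i, (β - m)| + 1, by positivity, fun s hs h5 => ?_⟩
    have hsp := Om_pos hσ hs
    have heq : Set.EqOn (fun y : ℝ => (0 + 1 * y) ^ β) (fun y : ℝ => y ^ β) (Om σ) :=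
      fun y _ => by norm_num
    rw [← iteratedDerivWithin_congr heq hs,
      iteratedDerivWithin_affine_rpow β 0 1 isOpen_Om
        (fun y hy => by simpa using Om_pos hσ hy) i s hs]
    have : |(1:ℝ) ^ i * (∏ m ∈ Finset.range i, (β - m)) * (0 + 1 * s) ^ (β - i)|
        = |∏ m ∈ Finset.range i, (β - m)| * s ^ (β - i) := by
      rw [one_pow, one_mul, abs_mul, zero_add, one_mul,
        abs_of_nonneg (Real.rpow_nonneg (le_of_lt hsp) _)]
    rw [this]
    have hge : (0:ℝ) ≤ s ^ (β - i) := Real.rpow_nonneg (le_of_lt hsp) _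
    nlinarith [abs_nonneg (∏ m ∈ Finset.range i, (β - m))]

lemma Sy.add (h1 : Sy σ α u) (h2 : Sy σ α v) : Sy σ α (fun s => u s + v s) := by
  refine ⟨h1.1.add h2.1, fun i => ?_⟩
  obtain ⟨C, hC, hb⟩ := h1.2 i
  obtain ⟨C', hC', hb'⟩ := h2.2 i
  refine ⟨C + C', by positivity, fun s hs h5 => ?_⟩
  have key : iteratedDerivWithin i (fun s => u s + v s) (Om σ) s
      = iteratedDerivWithin i u (Om σ) s + iteratedDerivWithin i v (Om σ) s := by
    have := iteratedDerivWithin_add hs uniqueDiffOn_Om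
      ((h1.1.of_le (natCast_le_infty i)) s hs) ((h2.1.of_le (natCast_le_infty i)) s hs)
    simpa [Pi.add_def] using this
  rw [key]
  calc |iteratedDerivWithin i u (Om σ) s + iteratedDerivWithin i v (Om σ) s|
      ≤ |iteratedDerivWithin i u (Om σ) s| + |iteratedDerivWithin i v (Om σ) s| := abs_add_le _ _
    _ ≤ C * s ^ (α - i) + C' * s ^ (α - i) := add_le_add (hb s hs h5) (hb' s hs h5)
    _ = (C + C') * s ^ (α - i) := by ring

lemma rpow_split (hσ : 1 < σ) {s : ℝ} (hs : s ∈ Om σ) {γ δ : ℝ} {i m : ℕ} (hmi : m ≤ i) :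
    s ^ (γ - (m:ℝ)) * s ^ (δ - ((i - m : ℕ):ℝ)) = s ^ (γ + δ - (i:ℝ)) := by
  rw [← Real.rpow_add (Om_pos hσ hs), Nat.cast_sub hmi]
  ring_nf

lemma Sy.mul (hσ : 1 < σ) (hu : Sy σ α u) (hv : Sy σ β v) :
    Sy σ (α + β) (fun s => u s * v s) := by
  refine ⟨hu.1.mul hv.1, fun i => ?_⟩
  obtain ⟨C, hC, hb⟩ := hu.upto hσ i
  obtain ⟨C', hC', hb'⟩ := hv.upto hσ i
  refine ⟨2 ^ i * C * C', by positivity, fun s hs h5 => ?_⟩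
  have hsp := Om_pos hσ hs
  have key := norm_iteratedFDerivWithin_mul_le (𝕜 := ℝ) (N := ∞) hu.1 hv.1
    uniqueDiffOn_Om hs (natCast_le_infty i)
  calc |iteratedDerivWithin i (fun s => u s * v s) (Om σ) s|
      = ‖iteratedFDerivWithin ℝ i (fun s => u s * v s) (Om σ) s‖ := by
        rw [norm_iteratedFDerivWithin_eq_norm_iteratedDerivWithin, Real.norm_eq_abs]
    _ ≤ ∑ m ∈ Finset.range (i+1), (i.choose m : ℝ) *
          ‖iteratedFDerivWithin ℝ m u (Om σ) s‖ *
          ‖iteratedFDerivWithin ℝ (i-m) v (Om σ) s‖ := key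
    _ ≤ ∑ m ∈ Finset.range (i+1), (i.choose m : ℝ) * (C * C' * s ^ (α + β - i)) := by
        apply Finset.sum_le_sum
        intro m hm
        have hmi : m ≤ i := Finset.mem_range_succ_iff.mp hm
        have e1 : ‖iteratedFDerivWithin ℝ m u (Om σ) s‖ ≤ C * s ^ (α - m) := by
          rw [norm_iteratedFDerivWithin_eq_norm_iteratedDerivWithin, Real.norm_eq_abs]
          exact hb m hmi s hs h5
        have e2 : ‖iteratedFDerivWithin ℝ (i-m) v (Om σ) s‖ ≤ C' * s ^ (β - ((i-m : ℕ):ℝ)) := by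
          rw [norm_iteratedFDerivWithin_eq_norm_iteratedDerivWithin, Real.norm_eq_abs]
          exact hb' (i-m) (Nat.sub_le i m) s hs h5
        calc (i.choose m : ℝ) * ‖iteratedFDerivWithin ℝ m u (Om σ) s‖ *
              ‖iteratedFDerivWithin ℝ (i-m) v (Om σ) s‖
            ≤ (i.choose m : ℝ) * (C * s ^ (α - m)) * (C' * s ^ (β - ((i-m : ℕ):ℝ))) := by
              apply mul_le_mul (mul_le_mul_of_nonneg_left e1 (by positivity)) e2
                (norm_nonneg _) (by positivity)
          _ = (i.choose m : ℝ) * (C * C' * (s ^ (α - m) * s ^ (β - ((i-m : ℕ):ℝ)))) := by ring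
          _ = (i.choose m : ℝ) * (C * C' * s ^ (α + β - i)) := by rw [rpow_split hσ hs hmi]
    _ = (∑ m ∈ Finset.range (i+1), (i.choose m : ℝ)) * (C * C' * s ^ (α + β - i)) := by
        rw [← Finset.sum_mul]
    _ = 2 ^ i * C * C' * s ^ (α + β - i) := by
        have : (∑ m ∈ Finset.range (i+1), (i.choose m : ℝ)) = 2 ^ i := by
          exact_mod_cast Nat.sum_range_choose i
        rw [this]; ring

lemma Sy.mul_dsy {w : ℝ → ℝ → ℝ} (hσ : 1 < σ) (hu : Sy σ α u) (hw : DSy σ β w) :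
    DSy σ (α + β) (fun t s => u s * w t s) := by
  refine ⟨fun t ht => hu.1.mul (hw.1 t ht), fun i => ?_⟩
  obtain ⟨C, hC, hb⟩ := hu.upto hσ i
  obtain ⟨C', ε, hC', hε, hb'⟩ := hw.upto hσ i
  refine ⟨2 ^ i * C * C', ε, by positivity, hε, fun t ht s hs h5 => ?_⟩
  have hsp := Om_pos hσ hs
  have key := norm_iteratedFDerivWithin_mul_le (𝕜 := ℝ) (N := ∞) hu.1 (hw.1 t ht)
    uniqueDiffOn_Om hs (natCast_le_infty i)
  calc |iteratedDerivWithin i (fun s => u s * w t s) (Om σ) s|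
      = ‖iteratedFDerivWithin ℝ i (fun s => u s * w t s) (Om σ) s‖ := by
        rw [norm_iteratedFDerivWithin_eq_norm_iteratedDerivWithin, Real.norm_eq_abs]
    _ ≤ ∑ m ∈ Finset.range (i+1), (i.choose m : ℝ) *
          ‖iteratedFDerivWithin ℝ m u (Om σ) s‖ *
          ‖iteratedFDerivWithin ℝ (i-m) (w t) (Om σ) s‖ := key
    _ ≤ ∑ m ∈ Finset.range (i+1), (i.choose m : ℝ) *
          (C * C' * s ^ (α + β - i) * Real.exp (-(ε * (s ^ σ * t)))) := by
        apply Finset.sum_le_sum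
        intro m hm
        have hmi : m ≤ i := Finset.mem_range_succ_iff.mp hm
        have e1 : ‖iteratedFDerivWithin ℝ m u (Om σ) s‖ ≤ C * s ^ (α - m) := by
          rw [norm_iteratedFDerivWithin_eq_norm_iteratedDerivWithin, Real.norm_eq_abs]
          exact hb m hmi s hs h5
        have e2 : ‖iteratedFDerivWithin ℝ (i-m) (w t) (Om σ) s‖ ≤
            C' * s ^ (β - ((i-m : ℕ):ℝ)) * Real.exp (-(ε * (s ^ σ * t))) := by
          rw [norm_iteratedFDerivWithin_eq_norm_iteratedDerivWithin, Real.norm_eq_abs]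
          exact hb' (i-m) (Nat.sub_le i m) t ht s hs h5
        calc (i.choose m : ℝ) * ‖iteratedFDerivWithin ℝ m u (Om σ) s‖ *
              ‖iteratedFDerivWithin ℝ (i-m) (w t) (Om σ) s‖
            ≤ (i.choose m : ℝ) * (C * s ^ (α - m)) *
              (C' * s ^ (β - ((i-m : ℕ):ℝ)) * Real.exp (-(ε * (s ^ σ * t)))) := by
              apply mul_le_mul (mul_le_mul_of_nonneg_left e1 (by positivity)) e2
                (norm_nonneg _) (by positivity)
          _ = (i.choose m : ℝ) * (C * C' * (s ^ (α - m) * s ^ (β - ((i-m : ℕ):ℝ))) *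
                Real.exp (-(ε * (s ^ σ * t)))) := by ring
          _ = (i.choose m : ℝ) * (C * C' * s ^ (α + β - i) * Real.exp (-(ε * (s ^ σ * t)))) := by
              rw [rpow_split hσ hs hmi]
    _ = (∑ m ∈ Finset.range (i+1), (i.choose m : ℝ)) *
          (C * C' * s ^ (α + β - i) * Real.exp (-(ε * (s ^ σ * t)))) := by
        rw [← Finset.sum_mul]
    _ = 2 ^ i * C * C' * s ^ (α + β - i) * Real.exp (-(ε * (s ^ σ * t))) := by
        have : (∑ m ∈ Finset.range (i+1), (i.choose m : ℝ)) = 2 ^ i := by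
          exact_mod_cast Nat.sum_range_choose i
        rw [this]; ring

lemma Sy.pow (hσ : 1 < σ) (hu : Sy σ α u) (j : ℕ) : Sy σ (α * j) (fun s => u s ^ j) := by
  induction j with
  | zero => exact (sy_const hσ 1).of_eq (by norm_num) (fun s _ => by norm_num)
  | succ j IH =>
    exact ((IH.mul hσ hu)).of_eq (by push_cast; ring) (fun s _ => by rw [pow_succ])

/-- crude composition bound: composing a bounded-derivatives outer function with a symbol of
nonpositive order gives a symbol of order `0`. -/
lemma sy_comp_bounded (hσ : 1 < σ) {h : ℝ → ℝ} {W : Set ℝ} (hW : IsOpen W)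
    (hh : ContDiffOn ℝ ∞ h W) {αu : ℝ} (hαu : αu ≤ 0) (hu : Sy σ αu u)
    (hmap : ∀ s ∈ Om σ, u s ∈ W)
    (hbd : ∀ i : ℕ, ∃ M : ℝ, 0 < M ∧ ∀ s ∈ Om σ, 5 ≤ s ^ σ →
      ∀ m ≤ i, |iteratedDerivWithin m h W (u s)| ≤ M) :
    Sy σ 0 (fun s => h (u s)) := by
  have hcd : ContDiffOn ℝ ∞ (fun s => h (u s)) (Om σ) :=
    hh.comp hu.1 (fun s hs => hmap s hs)
  refine ⟨hcd, fun i => ?_⟩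
  obtain ⟨M, hM, hMb⟩ := hbd i
  obtain ⟨Cu, hCu, hbu⟩ := hu.upto hσ i
  set K := max 1 Cu with hK
  have hK1 : (1:ℝ) ≤ K := le_max_left _ _
  refine ⟨(i.factorial : ℝ) * M * K ^ i, by positivity, fun s hs h5 => ?_⟩
  have hsp := Om_pos hσ hs
  have hs1 := Om_one_lt hσ hs
  have key := norm_iteratedFDerivWithin_comp_le (𝕜 := ℝ) (g := h) (f := u)
    (N := ∞) hh hu.1 (natCast_le_infty i) hW.uniqueDiffOn uniqueDiffOn_Om
    (fun s hs => hmap s hs) hs (C := M) (D := K * s⁻¹)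
    (fun m hm => by
      rw [norm_iteratedFDerivWithin_eq_norm_iteratedDerivWithin, Real.norm_eq_abs]
      exact hMb s hs h5 m hm)
    (fun m hm1 hmi => by
      rw [norm_iteratedFDerivWithin_eq_norm_iteratedDerivWithin, Real.norm_eq_abs]
      have e1 := hbu m hmi s hs h5
      have e2 : s ^ (αu - (m:ℝ)) ≤ (s⁻¹) ^ m := by
        have hsplit : s ^ (αu - (m:ℝ)) = s ^ αu * s ^ (-(m:ℝ)) := by
          rw [← Real.rpow_add hsp]; ring_nf
        have h1 : s ^ αu ≤ 1 := Real.rpow_le_one_of_one_le_of_nonpos (le_of_lt hs1) hαu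
        have h2 : s ^ (-(m:ℝ)) = (s⁻¹) ^ m := by
          rw [Real.rpow_neg (le_of_lt hsp), Real.rpow_natCast, inv_pow]
        rw [hsplit, h2]
        nlinarith [pow_nonneg (le_of_lt (inv_pos.2 hsp)) m, Real.rpow_nonneg (le_of_lt hsp) αu]
      have e3 : Cu ≤ K ^ m := le_trans (le_max_right 1 Cu) (le_self_pow₀ hK1 (Nat.one_le_iff_ne_zero.mp hm1))
      calc |iteratedDerivWithin m u (Om σ) s| ≤ Cu * s ^ (αu - (m:ℝ)) := e1
        _ ≤ K ^ m * (s⁻¹) ^ m := by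
            apply mul_le_mul e3 e2 (Real.rpow_nonneg (le_of_lt hsp) _) (by positivity)
        _ = (K * s⁻¹) ^ m := (mul_pow _ _ _).symm)
  rw [norm_iteratedFDerivWithin_eq_norm_iteratedDerivWithin, Real.norm_eq_abs] at key
  have hfin : (i.factorial : ℝ) * M * (K * s⁻¹) ^ i = (i.factorial : ℝ) * M * K ^ i * s ^ ((0:ℝ) - i) := by
    rw [mul_pow]
    have h2 : s ^ ((0:ℝ) - (i:ℝ)) = (s⁻¹) ^ i := by
      rw [zero_sub, Real.rpow_neg (le_of_lt hsp), Real.rpow_natCast, inv_pow]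
    rw [h2]; ring
  calc |iteratedDerivWithin i (fun s => h (u s)) (Om σ) s|
      = |iteratedDerivWithin i (h ∘ u) (Om σ) s| := rfl
    _ ≤ (i.factorial : ℝ) * M * (K * s⁻¹) ^ i := key
    _ = (i.factorial : ℝ) * M * K ^ i * s ^ ((0:ℝ) - i) := hfin

/-- The outer domain for the compositions. -/
def WS : Set ℝ := Set.Iio ((4:ℝ)⁻¹)

lemma isOpen_WS : IsOpen WS := isOpen_Iio

lemma WS_pos : ∀ y ∈ WS, (0:ℝ) < 1 + (-4) * y := by
  intro y hy
  have : y < (4:ℝ)⁻¹ := hy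
  nlinarith

lemma contDiffOn_affine_rpow (β : ℝ) : ContDiffOn ℝ ∞ (fun y => (1 + (-4)*y) ^ β) WS := by
  intro y hy
  have hne : (1 + (-4)*y) ≠ 0 := ne_of_gt (WS_pos y hy)
  have h1 : ContDiffAt ℝ ∞ (fun x : ℝ => x ^ β) (1 + (-4)*y) :=
    Real.contDiffAt_rpow_const_of_ne hne
  have h2 : ContDiffAt ℝ ∞ (fun y : ℝ => 1 + (-4)*y) y :=
    (contDiff_const.add (contDiff_const.mul contDiff_id)).contDiffAt
  exact (h1.comp y h2).contDiffWithinAt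

lemma mem_WS {y : ℝ} (hy0 : 0 < y) (hy : y ≤ (5:ℝ)⁻¹) : y ∈ WS := by
  simp only [WS, Set.mem_Iio]; nlinarith

lemma bd_affine_rpow (β : ℝ) (i : ℕ) : ∃ M : ℝ, 0 < M ∧ ∀ y : ℝ, 0 < y → y ≤ (5:ℝ)⁻¹ →
    ∀ m ≤ i, |iteratedDerivWithin m (fun y => (1 + (-4)*y) ^ β) WS y| ≤ M := by
  refine ⟨1 + ∑ m ∈ Finset.range (i+1),
    (4:ℝ)^m * |∏ l ∈ Finset.range m, (β - l)| * (5:ℝ) ^ ((m:ℝ) + |β|), ?_, ?_⟩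
  · have : ∀ m ∈ Finset.range (i+1),
        (0:ℝ) ≤ (4:ℝ)^m * |∏ l ∈ Finset.range m, (β - l)| * (5:ℝ) ^ ((m:ℝ) + |β|) := by
      intro m _; positivity
    have := Finset.sum_nonneg this
    linarith
  · intro y hy0 hy5 m hmi
    have hyW : y ∈ WS := mem_WS hy0 hy5
    rw [iteratedDerivWithin_affine_rpow β 1 (-4) isOpen_WS WS_pos m y hyW]
    set X := 1 + (-4)*y with hX
    have hX5 : (5:ℝ)⁻¹ ≤ X := by rw [hX]; nlinarith
    have hX1 : X ≤ 1 := by rw [hX]; nlinarith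
    have hXpos : 0 < X := WS_pos y hyW
    have hpow : X ^ (β - (m:ℝ)) ≤ (5:ℝ) ^ ((m:ℝ) + |β|) := by
      rcases le_or_gt 0 (β - (m:ℝ)) with hγ | hγ
      · have e1 : X ^ (β - (m:ℝ)) ≤ 1 := Real.rpow_le_one (le_of_lt hXpos) hX1 hγ
        have e2 : (1:ℝ) ≤ (5:ℝ) ^ ((m:ℝ) + |β|) := by
          have := Real.rpow_le_rpow_of_exponent_le (by norm_num : (1:ℝ) ≤ 5)
            (by positivity : (0:ℝ) ≤ (m:ℝ) + |β|)
          simpa using this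
        linarith
      · have e1 : X ^ (β - (m:ℝ)) ≤ ((5:ℝ)⁻¹) ^ (β - (m:ℝ)) :=
          Real.rpow_le_rpow_of_nonpos (by norm_num) hX5 (le_of_lt hγ)
        have e2 : ((5:ℝ)⁻¹) ^ (β - (m:ℝ)) = (5:ℝ) ^ ((m:ℝ) - β) := by
          rw [← Real.rpow_neg_one (5:ℝ), ← Real.rpow_mul (by norm_num : (0:ℝ) ≤ 5)]
          congr 1; ring
        have e3 : (5:ℝ) ^ ((m:ℝ) - β) ≤ (5:ℝ) ^ ((m:ℝ) + |β|) :=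
          Real.rpow_le_rpow_of_exponent_le (by norm_num)
            (by linarith [neg_abs_le β, le_abs_self β])
        linarith [e1, e2 ▸ e1]
    have habs : |(-4:ℝ)^m * (∏ l ∈ Finset.range m, (β - l)) * X ^ (β - m)|
        = 4^m * |∏ l ∈ Finset.range m, (β - l)| * X ^ (β - (m:ℝ)) := by
      rw [abs_mul, abs_mul, abs_pow, abs_neg, abs_of_nonneg (by norm_num : (0:ℝ) ≤ (4:ℝ)),
        abs_of_nonneg (Real.rpow_nonneg (le_of_lt hXpos) _)]
    rw [habs]
    have hterm : (4:ℝ)^m * |∏ l ∈ Finset.range m, (β - l)| * X ^ (β - (m:ℝ))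
        ≤ (4:ℝ)^m * |∏ l ∈ Finset.range m, (β - l)| * (5:ℝ) ^ ((m:ℝ) + |β|) := by
      apply mul_le_mul_of_nonneg_left hpow; positivity
    have hmem : m ∈ Finset.range (i+1) := Finset.mem_range_succ_iff.mpr hmi
    have hsingle := Finset.single_le_sum (f := fun m =>
      (4:ℝ)^m * |∏ l ∈ Finset.range m, (β - l)| * (5:ℝ) ^ ((m:ℝ) + |β|))
      (fun m _ => by positivity) hmem
    linarith

lemma bd_inv (i : ℕ) : ∃ M : ℝ, 0 < M ∧ ∀ x : ℝ, 1 < x →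
    ∀ m ≤ i, |iteratedDerivWithin m (Inv.inv : ℝ → ℝ) (Set.Ioi 1) x| ≤ M := by
  refine ⟨1 + ∑ m ∈ Finset.range (i+1), |∏ l ∈ Finset.range m, ((-1:ℝ) - l)|, ?_, ?_⟩
  · have := Finset.sum_nonneg (fun m (_ : m ∈ Finset.range (i+1)) =>
      abs_nonneg (∏ l ∈ Finset.range m, ((-1:ℝ) - l)))
    linarith
  · intro x hx m hmi
    have hmem : x ∈ Set.Ioi (1:ℝ) := hx
    have heq : Set.EqOn (fun y : ℝ => (0 + 1*y) ^ (-1:ℝ)) (Inv.inv : ℝ → ℝ) (Set.Ioi 1) := by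
      intro y hy; simp only [zero_add, one_mul]; exact Real.rpow_neg_one y
    rw [← iteratedDerivWithin_congr heq hmem,
      iteratedDerivWithin_affine_rpow (-1:ℝ) 0 1 isOpen_Ioi
        (fun y hy => by simpa using lt_trans one_pos hy) m x hmem]
    have hxpos : (0:ℝ) < 0 + 1*x := by simpa using lt_trans one_pos hx
    have hple : (0 + 1*x) ^ ((-1:ℝ) - m) ≤ 1 :=
      Real.rpow_le_one_of_one_le_of_nonpos (by simpa using le_of_lt hx)
        (by push_cast; linarith [Nat.cast_nonneg (α := ℝ) m])
    have habs : |(1:ℝ)^m * (∏ l ∈ Finset.range m, ((-1:ℝ) - l)) * (0 + 1*x) ^ ((-1:ℝ) - m)|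
        = |∏ l ∈ Finset.range m, ((-1:ℝ) - l)| * (0 + 1*x) ^ ((-1:ℝ) - m) := by
      rw [one_pow, one_mul, abs_mul, abs_of_nonneg (Real.rpow_nonneg (le_of_lt hxpos) _)]
    rw [habs]
    have hmem2 : m ∈ Finset.range (i+1) := Finset.mem_range_succ_iff.mpr hmi
    have hsingle := Finset.single_le_sum
      (f := fun m => |∏ l ∈ Finset.range m, ((-1:ℝ) - l)|)
      (fun m _ => abs_nonneg _) hmem2
    nlinarith [abs_nonneg (∏ l ∈ Finset.range m, ((-1:ℝ) - l)),
      Real.rpow_nonneg (le_of_lt hxpos) ((-1:ℝ) - m)]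

lemma g3_gt_one {y : ℝ} (hy : y ∈ WS) : 1 < 1 + (1 + (-4)*y) ^ ((1:ℝ)/2) := by
  have := Real.rpow_pos_of_pos (WS_pos y hy) ((1:ℝ)/2)
  linarith

lemma contDiffOn_g3 : ContDiffOn ℝ ∞ (fun y : ℝ => 1 + (1 + (-4)*y) ^ ((1:ℝ)/2)) WS :=
  contDiffOn_const.add (contDiffOn_affine_rpow _)

lemma contDiffOn_h3 : ContDiffOn ℝ ∞ (fun y : ℝ => (1 + (1 + (-4)*y) ^ ((1:ℝ)/2))⁻¹) WS :=
  contDiffOn_g3.inv (fun y hy => ne_of_gt (lt_trans one_pos (g3_gt_one hy)))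

lemma bd_h3 (i : ℕ) : ∃ M : ℝ, 0 < M ∧ ∀ y : ℝ, 0 < y → y ≤ (5:ℝ)⁻¹ →
    ∀ m ≤ i, |iteratedDerivWithin m
      (fun y : ℝ => (1 + (1 + (-4)*y) ^ ((1:ℝ)/2))⁻¹) WS y| ≤ M := by
  obtain ⟨Minv, hMinv, hinv⟩ := bd_inv i
  obtain ⟨M1, hM1, hb1⟩ := bd_affine_rpow ((1:ℝ)/2) i
  set D := max 1 M1 with hD
  have hD1 : (1:ℝ) ≤ D := le_max_left _ _
  refine ⟨1 + ∑ m ∈ Finset.range (i+1), (m.factorial : ℝ) * Minv * D ^ m, ?_, ?_⟩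
  · have := Finset.sum_nonneg (fun m (_ : m ∈ Finset.range (i+1)) =>
      (by positivity : (0:ℝ) ≤ (m.factorial : ℝ) * Minv * D ^ m))
    linarith
  · intro y hy0 hy5 m hmi
    have hyW : y ∈ WS := mem_WS hy0 hy5
    have hmap : Set.MapsTo (fun y : ℝ => 1 + (1 + (-4)*y) ^ ((1:ℝ)/2)) WS (Set.Ioi 1) :=
      fun z hz => g3_gt_one hz
    have hinvCD : ContDiffOn ℝ ∞ (Inv.inv : ℝ → ℝ) (Set.Ioi 1) :=
      ContDiffOn.mono (contDiffOn_inv ℝ) (fun z hz => ne_of_gt (lt_trans one_pos hz))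
    have key := norm_iteratedFDerivWithin_comp_le (𝕜 := ℝ)
      (g := (Inv.inv : ℝ → ℝ)) (f := fun y : ℝ => 1 + (1 + (-4)*y) ^ ((1:ℝ)/2))
      (N := ∞) hinvCD contDiffOn_g3 (natCast_le_infty m) (uniqueDiffOn_Ioi 1)
      isOpen_WS.uniqueDiffOn hmap hyW (C := Minv) (D := D)
      (fun l hl => by
        rw [norm_iteratedFDerivWithin_eq_norm_iteratedDerivWithin, Real.norm_eq_abs]
        exact hinv _ (g3_gt_one hyW) l (le_trans hl hmi))
      (fun l hl1 hlm => by
        rw [norm_iteratedFDerivWithin_eq_norm_iteratedDerivWithin, Real.norm_eq_abs]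
        have hc : iteratedDerivWithin l (fun y : ℝ => 1 + (1 + (-4)*y) ^ ((1:ℝ)/2)) WS y
            = iteratedDerivWithin l (fun y : ℝ => (1 + (-4)*y) ^ ((1:ℝ)/2)) WS y :=
          iteratedDerivWithin_const_add (Nat.lt_of_lt_of_le Nat.zero_lt_one hl1) 1
        rw [hc]
        calc |iteratedDerivWithin l (fun y : ℝ => (1 + (-4)*y) ^ ((1:ℝ)/2)) WS y|
            ≤ M1 := hb1 y hy0 hy5 l (le_trans hlm hmi)
          _ ≤ D := le_max_right _ _
          _ ≤ D ^ l := le_self_pow₀ hD1 (Nat.one_le_iff_ne_zero.mp hl1))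
    rw [norm_iteratedFDerivWithin_eq_norm_iteratedDerivWithin, Real.norm_eq_abs] at key
    have hcomp : (Inv.inv ∘ fun y : ℝ => 1 + (1 + (-4)*y) ^ ((1:ℝ)/2))
        = fun y : ℝ => (1 + (1 + (-4)*y) ^ ((1:ℝ)/2))⁻¹ := rfl
    rw [hcomp] at key
    have hmem2 : m ∈ Finset.range (i+1) := Finset.mem_range_succ_iff.mpr hmi
    have hsingle := Finset.single_le_sum
      (f := fun m => (m.factorial : ℝ) * Minv * D ^ m)
      (fun m _ => by positivity) hmem2
    linarith

def l1f (σ : ℝ) (s : ℝ) : ℝ := (-(s^σ) + Real.sqrt ((s^σ)^2 - 4*(s^σ)))/2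
def l2f (σ : ℝ) (s : ℝ) : ℝ := (-(s^σ) - Real.sqrt ((s^σ)^2 - 4*(s^σ)))/2

lemma u_inv (hσ : 1 < σ) {s : ℝ} (hs : s ∈ Om σ) : s ^ (-σ) = (s^σ)⁻¹ :=
  Real.rpow_neg (le_of_lt (Om_pos hσ hs)) σ

lemma u_pos (hσ : 1 < σ) {s : ℝ} (hs : s ∈ Om σ) : 0 < s ^ (-σ) :=
  Real.rpow_pos_of_pos (Om_pos hσ hs) _

lemma u_mem_WS (hσ : 1 < σ) {s : ℝ} (hs : s ∈ Om σ) : s ^ (-σ) ∈ WS := by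
  have h4 := Om_four_lt hσ hs
  have hrpos := Om_spow_pos hσ hs
  have : (s^σ)⁻¹ < (4:ℝ)⁻¹ := by
    rw [inv_lt_inv₀ hrpos (by norm_num)]; exact h4
  rw [WS, Set.mem_Iio, u_inv hσ hs]; exact this

lemma u_le5 (hσ : 1 < σ) {s : ℝ} (hs : s ∈ Om σ) (h5 : 5 ≤ s^σ) : s ^ (-σ) ≤ (5:ℝ)⁻¹ := by
  have hrpos := Om_spow_pos hσ hs
  rw [u_inv hσ hs]
  rw [inv_le_inv₀ hrpos (by norm_num)] at *
  · exact h5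
  
lemma X_pos (hσ : 1 < σ) {s : ℝ} (hs : s ∈ Om σ) : 0 < 1 + (-4) * s ^ (-σ) :=
  WS_pos _ (u_mem_WS hσ hs)

lemma phi_pos (hσ : 1 < σ) {s : ℝ} (hs : s ∈ Om σ) :
    0 < (1 + (-4) * s ^ (-σ)) ^ ((1:ℝ)/2) :=
  Real.rpow_pos_of_pos (X_pos hσ hs) _

lemma phi_sq (hσ : 1 < σ) {s : ℝ} (hs : s ∈ Om σ) :
    ((1 + (-4) * s ^ (-σ)) ^ ((1:ℝ)/2))^(2:ℕ) = 1 + (-4) * s ^ (-σ) := by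
  have hX := X_pos hσ hs
  rw [← Real.rpow_natCast ((1 + (-4) * s ^ (-σ)) ^ ((1:ℝ)/2)) 2,
    ← Real.rpow_mul (le_of_lt hX)]
  norm_num

lemma sqrt_disc (hσ : 1 < σ) {s : ℝ} (hs : s ∈ Om σ) :
    Real.sqrt ((s^σ)^2 - 4*(s^σ)) = s^σ * (1 + (-4) * s ^ (-σ)) ^ ((1:ℝ)/2) := by
  have hr0 := Om_spow_pos hσ hs
  have harg : (s^σ)^2 - 4*(s^σ) = (s^σ)^2 * (1 + (-4) * (s^σ)⁻¹) := by
    field_simp; ring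
  rw [u_inv hσ hs, harg, Real.sqrt_mul (sq_nonneg _), Real.sqrt_sq (le_of_lt hr0),
    Real.sqrt_eq_rpow]

lemma sub_l1l2 (hσ : 1 < σ) {s : ℝ} (hs : s ∈ Om σ) :
    l1f σ s - l2f σ s = s^σ * (1 + (-4) * s ^ (-σ)) ^ ((1:ℝ)/2) := by
  rw [← sqrt_disc hσ hs, l1f, l2f]; ring

lemma sy_phi (hσ : 1 < σ) : Sy σ 0 (fun s => (1 + (-4) * s ^ (-σ)) ^ ((1:ℝ)/2)) := by
  have := sy_comp_bounded hσ isOpen_WS (contDiffOn_affine_rpow ((1:ℝ)/2))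
    (neg_nonpos.mpr (le_of_lt (lt_trans one_pos hσ))) (sy_rpow hσ (-σ))
    (fun s hs => u_mem_WS hσ hs) ?_
  · exact this
  · intro i
    obtain ⟨M, hM, hb⟩ := bd_affine_rpow ((1:ℝ)/2) i
    exact ⟨M, hM, fun s hs h5 m hm => hb _ (u_pos hσ hs) (u_le5 hσ hs h5) m hm⟩

lemma sy_h2u (hσ : 1 < σ) : Sy σ 0 (fun s => (1 + (-4) * s ^ (-σ)) ^ (-((1:ℝ)/2))) := by
  have := sy_comp_bounded hσ isOpen_WS (contDiffOn_affine_rpow (-((1:ℝ)/2)))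
    (neg_nonpos.mpr (le_of_lt (lt_trans one_pos hσ))) (sy_rpow hσ (-σ))
    (fun s hs => u_mem_WS hσ hs) ?_
  · exact this
  · intro i
    obtain ⟨M, hM, hb⟩ := bd_affine_rpow (-((1:ℝ)/2)) i
    exact ⟨M, hM, fun s hs h5 m hm => hb _ (u_pos hσ hs) (u_le5 hσ hs h5) m hm⟩

lemma sy_h3u (hσ : 1 < σ) :
    Sy σ 0 (fun s => (1 + (1 + (-4) * s ^ (-σ)) ^ ((1:ℝ)/2))⁻¹) := by
  have := sy_comp_bounded hσ isOpen_WS contDiffOn_h3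
    (neg_nonpos.mpr (le_of_lt (lt_trans one_pos hσ))) (sy_rpow hσ (-σ))
    (fun s hs => u_mem_WS hσ hs) ?_
  · exact this
  · intro i
    obtain ⟨M, hM, hb⟩ := bd_h3 i
    exact ⟨M, hM, fun s hs h5 m hm => hb _ (u_pos hσ hs) (u_le5 hσ hs h5) m hm⟩

lemma sy_l2 (hσ : 1 < σ) : Sy σ σ (l2f σ) := by
  have base := (sy_const hσ (-(2⁻¹:ℝ))).mul hσ
    ((sy_rpow hσ σ).mul hσ ((sy_const hσ 1).add (sy_phi hσ)))
  refine base.of_eq (by ring) ?_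
  intro s hs
  simp only [l2f]
  rw [sqrt_disc hσ hs]
  ring

lemma sy_l1 (hσ : 1 < σ) : Sy σ 0 (l1f σ) := by
  have base := (sy_const hσ (-2:ℝ)).mul hσ (sy_h3u hσ)
  refine base.of_eq (by ring) ?_
  intro s hs
  have hr0 := Om_spow_pos hσ hs
  have hφ := phi_pos hσ hs
  have hφ2 := phi_sq hσ hs
  have h1φ : (0:ℝ) < 1 + (1 + (-4) * s ^ (-σ)) ^ ((1:ℝ)/2) := by linarith
  have huinv := u_inv hσ hs
  have hrinv : s^σ * (s^σ)⁻¹ = 1 := mul_inv_cancel₀ (ne_of_gt hr0)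
  simp only [l1f]
  rw [sqrt_disc hσ hs]
  set φ := (1 + (-4) * s ^ (-σ)) ^ ((1:ℝ)/2) with hφdef
  rw [huinv] at hφ2
  rw [mul_inv_eq_iff_eq_mul₀ (ne_of_gt h1φ)]
  linear_combination (-(s^σ)/2) * hφ2 + 2 * hrinv

lemma sy_invsub (hσ : 1 < σ) : Sy σ (-σ) (fun s => (l1f σ s - l2f σ s)⁻¹) := by
  have base := (sy_rpow hσ (-σ)).mul hσ (sy_h2u hσ)
  refine base.of_eq (by ring) ?_
  intro s hs
  have hX := X_pos hσ hs
  have hr0 := Om_spow_pos hσ hs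
  show s ^ (-σ) * (1 + (-4) * s ^ (-σ)) ^ (-((1:ℝ)/2)) = (l1f σ s - l2f σ s)⁻¹
  rw [sub_l1l2 hσ hs, mul_inv, ← u_inv hσ hs, Real.rpow_neg (le_of_lt hX)]

lemma one_le_infty : (1 : WithTop ℕ∞) ≤ ∞ := by exact_mod_cast le_top

lemma infty_add_one : (∞ : WithTop ℕ∞) + 1 ≤ ∞ := by
  norm_num

lemma Sy.deriv (hσ : 1 < σ) (hu : Sy σ α u) :
    Sy σ (α - 1) (fun s => derivWithin u (Om σ) s) := by
  constructor
  · exact hu.1.derivWithin uniqueDiffOn_Om infty_add_one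
  · intro i
    obtain ⟨C, hC, hb⟩ := hu.2 (i+1)
    refine ⟨C, hC, fun s hs h5 => ?_⟩
    have he : iteratedDerivWithin (i+1) u (Om σ) s
        = iteratedDerivWithin i (fun s => derivWithin u (Om σ) s) (Om σ) s :=
      by rw [iteratedDerivWithin_succ']
    rw [← he]
    have hb2 := hb s hs h5
    have hexp : α - ((i+1:ℕ):ℝ) = (α - 1) - i := by push_cast; ring
    rw [hexp] at hb2
    exact hb2

lemma l2f_le (hσ : 1 < σ) {s : ℝ} (hs : s ∈ Om σ) : l2f σ s ≤ -(s^σ)/2 := by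
  have := Real.sqrt_nonneg ((s^σ)^2 - 4*(s^σ))
  rw [l2f]; linarith

lemma exp_decay_bound {ε x : ℝ} (hε : 0 < ε) (hx : 0 ≤ x) :
    x * Real.exp (-(ε * x)) ≤ (2/ε) * Real.exp (-(ε/2 * x)) := by
  have hA : x ≤ (2/ε) * Real.exp (ε/2 * x) := by
    have h1 := Real.add_one_le_exp (ε/2 * x)
    have h2 : (0:ℝ) < 2/ε := by positivity
    have h3 : (2/ε) * (ε/2 * x + 1) ≤ (2/ε) * Real.exp (ε/2*x) :=
      mul_le_mul_of_nonneg_left h1 (le_of_lt h2)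
    have h4 : (2/ε) * (ε/2 * x + 1) = x + 2/ε := by field_simp
    linarith
  calc x * Real.exp (-(ε * x)) ≤ ((2/ε) * Real.exp (ε/2*x)) * Real.exp (-(ε*x)) := by
        apply mul_le_mul_of_nonneg_right hA (le_of_lt (Real.exp_pos _))
    _ = (2/ε) * Real.exp (-(ε/2 * x)) := by
        rw [mul_assoc, ← Real.exp_add]
        congr 2
        ring

lemma dsy_exp (hσ : 1 < σ) : DSy σ 0 (fun t s => Real.exp (l2f σ s * t)) := by
  have hl2 := sy_l2 hσ
  have hw := hl2.deriv hσ
  have hcd : ∀ t : ℝ, 0 < t → ContDiffOn ℝ ∞ (fun s => Real.exp (l2f σ s * t)) (Om σ) :=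
    fun t _ => (hl2.1.mul contDiffOn_const).exp
  refine ⟨hcd, ?_⟩
  suffices H : ∀ i : ℕ, ∃ C ε : ℝ, 0 < C ∧ 0 < ε ∧ ∀ m ≤ i, ∀ t : ℝ, 0 < t →
      ∀ s ∈ Om σ, 5 ≤ s^σ →
      |iteratedDerivWithin m (fun s => Real.exp (l2f σ s * t)) (Om σ) s| ≤
        C * s ^ ((0:ℝ) - m) * Real.exp (-(ε * (s ^ σ * t))) by
    intro i
    obtain ⟨C, ε, h1, h2, h3⟩ := H i
    exact ⟨C, ε, h1, h2, fun t ht s hs h5 => h3 i le_rfl t ht s hs h5⟩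
  intro i
  induction i with
  | zero =>
    refine ⟨1, 2⁻¹, one_pos, by norm_num, ?_⟩
    intro m hm t ht s hs h5
    obtain rfl := Nat.le_zero.mp hm
    have hr0 := Om_spow_pos hσ hs
    have hb : l2f σ s * t ≤ -(2⁻¹ * (s^σ * t)) := by
      have := l2f_le hσ hs
      nlinarith
    simp only [iteratedDerivWithin_zero, Nat.cast_zero, sub_zero, Real.rpow_zero]
    rw [abs_of_pos (Real.exp_pos _)]
    calc Real.exp (l2f σ s * t) ≤ Real.exp (-(2⁻¹ * (s^σ * t))) := Real.exp_le_exp.2 hb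
      _ = 1 * 1 * Real.exp (-(2⁻¹ * (s^σ * t))) := by ring
  | succ i IH =>
    obtain ⟨C, ε, hC, hε, hIH⟩ := IH
    obtain ⟨Cw, hCw, hbw⟩ := hw.upto hσ i
    set C' := max C (2^i * (C * Cw) * (2/ε)) with hC'
    refine ⟨C', ε/2, lt_max_of_lt_left hC, half_pos hε, ?_⟩
    intro m hm t ht s hs h5
    have hsp := Om_pos hσ hs
    have hr0 := Om_spow_pos hσ hs
    have hrt : (0:ℝ) ≤ s^σ * t := by positivity
    rcases Nat.lt_succ_iff_lt_or_eq.mp (Nat.lt_succ_of_le hm) with hlt | rfl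
    · refine le_trans (hIH m (Nat.lt_succ_iff.mp hlt) t ht s hs h5) ?_
      gcongr
      · exact le_max_left _ _
      · linarith
    · -- top order
      have hEd : Set.EqOn (derivWithin (fun s => Real.exp (l2f σ s * t)) (Om σ))
          (fun s' => Real.exp (l2f σ s' * t) * (derivWithin (l2f σ) (Om σ) s' * t)) (Om σ) := by
        intro z hz
        have hdz : HasDerivWithinAt (l2f σ) (derivWithin (l2f σ) (Om σ) z) (Om σ) z :=
          ((hl2.1.differentiableOn (by simp)) z hz).hasDerivWithinAt
        exact ((hdz.mul_const t).exp).derivWithin (uniqueDiffOn_Om z hz)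
      rw [iteratedDerivWithin_succ',
        iteratedDerivWithin_congr hEd hs]
      have hf1 : ContDiffOn ℝ ∞ (fun s' => Real.exp (l2f σ s' * t)) (Om σ) := hcd t ht
      have hg1 : ContDiffOn ℝ ∞ (fun s' => derivWithin (l2f σ) (Om σ) s' * t) (Om σ) :=
        hw.1.mul contDiffOn_const
      have key := norm_iteratedFDerivWithin_mul_le (𝕜 := ℝ) (N := ∞) hf1 hg1
        uniqueDiffOn_Om hs (natCast_le_infty i)
      have hterm : ∀ m' ∈ Finset.range (i+1), (i.choose m' : ℝ) *
          ‖iteratedFDerivWithin ℝ m' (fun s' => Real.exp (l2f σ s' * t)) (Om σ) s‖ *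
          ‖iteratedFDerivWithin ℝ (i-m') (fun s' => derivWithin (l2f σ) (Om σ) s' * t) (Om σ) s‖
          ≤ (i.choose m' : ℝ) * ((C * Cw) * (s ^ ((0:ℝ) + (σ-1) - i) * t *
              Real.exp (-(ε * (s ^ σ * t))))) := by
        intro m' hm'
        have hmi : m' ≤ i := Finset.mem_range_succ_iff.mp hm'
        have e1 : ‖iteratedFDerivWithin ℝ m' (fun s' => Real.exp (l2f σ s' * t)) (Om σ) s‖
            ≤ C * s ^ ((0:ℝ) - m') * Real.exp (-(ε * (s ^ σ * t))) := by
          rw [norm_iteratedFDerivWithin_eq_norm_iteratedDerivWithin, Real.norm_eq_abs]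
          exact hIH m' hmi t ht s hs h5
        have e2 : ‖iteratedFDerivWithin ℝ (i-m') (fun s' => derivWithin (l2f σ) (Om σ) s' * t)
            (Om σ) s‖ ≤ t * (Cw * s ^ ((σ-1) - ((i-m' : ℕ):ℝ))) := by
          rw [norm_iteratedFDerivWithin_eq_norm_iteratedDerivWithin, Real.norm_eq_abs]
          have hc : Set.EqOn (fun s' => derivWithin (l2f σ) (Om σ) s' * t)
              (fun s' => t * derivWithin (l2f σ) (Om σ) s') (Om σ) := fun z _ => by ring
          rw [iteratedDerivWithin_congr hc hs,
            iteratedDerivWithin_const_mul hs uniqueDiffOn_Om t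
              ((hw.1.of_le (natCast_le_infty (i - m'))) s hs)]
          rw [abs_mul, abs_of_pos ht]
          exact mul_le_mul_of_nonneg_left (hbw (i-m') (Nat.sub_le i m') s hs h5) (le_of_lt ht)
        calc (i.choose m' : ℝ) *
            ‖iteratedFDerivWithin ℝ m' (fun s' => Real.exp (l2f σ s' * t)) (Om σ) s‖ *
            ‖iteratedFDerivWithin ℝ (i-m') (fun s' => derivWithin (l2f σ) (Om σ) s' * t) (Om σ) s‖
            ≤ (i.choose m' : ℝ) * (C * s ^ ((0:ℝ) - m') * Real.exp (-(ε * (s ^ σ * t)))) *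
              (t * (Cw * s ^ ((σ-1) - ((i-m' : ℕ):ℝ)))) := by
              apply mul_le_mul (mul_le_mul_of_nonneg_left e1 (by positivity)) e2
                (norm_nonneg _) (by positivity)
          _ = (i.choose m' : ℝ) * ((C * Cw) * ((s ^ ((0:ℝ) - m') * s ^ ((σ-1) - ((i-m' : ℕ):ℝ)))
                * t * Real.exp (-(ε * (s ^ σ * t))))) := by ring
          _ = (i.choose m' : ℝ) * ((C * Cw) * (s ^ ((0:ℝ) + (σ-1) - i) * t *
                Real.exp (-(ε * (s ^ σ * t))))) := by rw [rpow_split hσ hs hmi]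
      have hsum : ‖iteratedFDerivWithin ℝ i (fun s' => Real.exp (l2f σ s' * t) *
          (derivWithin (l2f σ) (Om σ) s' * t)) (Om σ) s‖ ≤
          2^i * (C * Cw) * (s ^ ((0:ℝ) + (σ-1) - i) * t * Real.exp (-(ε * (s ^ σ * t)))) := by
        refine le_trans key ?_
        refine le_trans (Finset.sum_le_sum hterm) ?_
        rw [← Finset.sum_mul]
        have : (∑ m' ∈ Finset.range (i+1), (i.choose m' : ℝ)) = 2 ^ i := by
          exact_mod_cast Nat.sum_range_choose i
        rw [this]; exact le_of_eq (by ring)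
      have habs : |iteratedDerivWithin i (fun s' => Real.exp (l2f σ s' * t) *
          (derivWithin (l2f σ) (Om σ) s' * t)) (Om σ) s|
          = ‖iteratedFDerivWithin ℝ i (fun s' => Real.exp (l2f σ s' * t) *
          (derivWithin (l2f σ) (Om σ) s' * t)) (Om σ) s‖ := by
        rw [norm_iteratedFDerivWithin_eq_norm_iteratedDerivWithin, Real.norm_eq_abs]
      rw [habs]
      refine le_trans hsum ?_
      -- final exponential absorption
      have hsplit : s ^ ((0:ℝ) + (σ-1) - i) = s ^ ((0:ℝ) - ((i+1:ℕ):ℝ)) * s ^ σ := by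
        rw [← Real.rpow_add hsp]; congr 1; push_cast; ring
      rw [hsplit]
      have hxb := exp_decay_bound hε hrt
      calc 2^i * (C * Cw) * (s ^ ((0:ℝ) - ((i+1:ℕ):ℝ)) * s ^ σ * t *
            Real.exp (-(ε * (s ^ σ * t))))
          = 2^i * (C * Cw) * s ^ ((0:ℝ) - ((i+1:ℕ):ℝ)) *
            ((s ^ σ * t) * Real.exp (-(ε * (s ^ σ * t)))) := by ring
        _ ≤ 2^i * (C * Cw) * s ^ ((0:ℝ) - ((i+1:ℕ):ℝ)) *
            ((2/ε) * Real.exp (-(ε/2 * (s ^ σ * t)))) := by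
            apply mul_le_mul_of_nonneg_left hxb (by positivity)
        _ = (2^i * (C * Cw) * (2/ε)) * s ^ ((0:ℝ) - ((i+1:ℕ):ℝ)) *
            Real.exp (-(ε/2 * (s ^ σ * t))) := by ring
        _ ≤ C' * s ^ ((0:ℝ) - ((i+1:ℕ):ℝ)) * Real.exp (-(ε/2 * (s ^ σ * t))) := by
            apply mul_le_mul_of_nonneg_right
              (mul_le_mul_of_nonneg_right (le_max_right _ _) (by positivity))
              (le_of_lt (Real.exp_pos _))

def Gf (σ b : ℝ) (j : ℕ) (t s : ℝ) : ℝ :=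
  l1f σ s * Real.exp (l2f σ s * t) * (l2f σ s)^j * s^(b/2) / (l1f σ s - l2f σ s)

lemma dsy_G (hσ : 1 < σ) (b : ℝ) (j : ℕ) : DSy σ (σ * j + b/2 - σ) (Gf σ b j) := by
  have S1 := (((sy_l1 hσ).mul hσ ((sy_l2 hσ).pow hσ j)).mul hσ (sy_rpow hσ (b/2))).mul hσ
    (sy_invsub hσ)
  have D1 := S1.mul_dsy hσ (dsy_exp hσ)
  refine D1.of_eq (by push_cast; ring) ?_
  intro t _ s _
  show _ = Gf σ b j t s
  simp only [Gf]
  rw [div_eq_mul_inv]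
  ring

lemma natCast_lt_infty (i : ℕ) : (i : WithTop ℕ∞) < ∞ := by
  have h1 : ((i:ℕ∞) : WithTop ℕ∞) < ((⊤:ℕ∞) : WithTop ℕ∞) :=
    WithTop.coe_lt_coe.mpr (WithTop.coe_lt_top i)
  simpa using h1

/-- Scaling identity for iterated derivatives within open sets. -/
lemma iteratedDerivWithin_scale {f : ℝ → ℝ} {V : Set ℝ} (hV : IsOpen V)
    (hf : ContDiffOn ℝ ∞ f V) (c : ℝ) (i : ℕ) :
    ∀ x, c * x ∈ V → iteratedDerivWithin i (fun y => f (c * y)) ((fun y : ℝ => c * y) ⁻¹' V) x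
      = c ^ i * iteratedDerivWithin i f V (c * x) := by
  have hW : IsOpen ((fun y : ℝ => c * y) ⁻¹' V) :=
    hV.preimage (continuous_const.mul continuous_id)
  induction i with
  | zero => intro x hx; simp
  | succ i IH =>
    intro x hx
    have hxW : x ∈ (fun y : ℝ => c * y) ⁻¹' V := hx
    rw [iteratedDerivWithin_succ,
      derivWithin_congr (s := (fun y : ℝ => c * y) ⁻¹' V) (fun z hz => IH z hz) (IH x hx)]
    have hdiff : DifferentiableWithinAt ℝ (iteratedDerivWithin i f V) V (c*x) :=
      (hf.differentiableOn_iteratedDerivWithin (natCast_lt_infty i) hV.uniqueDiffOn) (c*x) hx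
    have hdF : HasDerivWithinAt (iteratedDerivWithin i f V)
        (iteratedDerivWithin (i+1) f V (c*x)) V (c*x) := by
      have h1 := hdiff.hasDerivWithinAt
      rwa [← iteratedDerivWithin_succ] at h1
    have hin : HasDerivWithinAt (fun y : ℝ => c * y) c ((fun y : ℝ => c * y) ⁻¹' V) x := by
      simpa using ((hasDerivAt_id x).const_mul c).hasDerivWithinAt
        (s := (fun y : ℝ => c * y) ⁻¹' V)
    have hcomp : HasDerivWithinAt (fun y => iteratedDerivWithin i f V (c * y))
        (iteratedDerivWithin (i+1) f V (c*x) * c) ((fun y : ℝ => c * y) ⁻¹' V) x :=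
      HasDerivWithinAt.comp x hdF hin (fun z hz => hz)
    have hfinal := hcomp.const_mul (c^i)
    rw [hfinal.derivWithin (hW.uniqueDiffOn.uniqueDiffWithinAt hxW)]
    ring

section Euclid

variable {N : ℕ}

local notation "EE" => EuclideanSpace ℝ (Fin N)

lemma q_fderiv : (fderiv ℝ (fun ζ : EE => ‖ζ‖^2))
    = ⇑((2:ℕ) • (innerSL ℝ : EE →L[ℝ] EE →L[ℝ] ℝ)) := by
  funext x
  rw [(hasStrictFDerivAt_norm_sq x).hasFDerivAt.fderiv]
  rfl

lemma q_iter1 (ξ : EE) : ‖iteratedFDeriv ℝ 1 (fun ζ : EE => ‖ζ‖^2) ξ‖ ≤ 2 * ‖ξ‖ := by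
  rw [← norm_iteratedFDeriv_fderiv, norm_iteratedFDeriv_zero,
    (hasStrictFDerivAt_norm_sq ξ).hasFDerivAt.fderiv, two_smul]
  calc ‖innerSL ℝ ξ + innerSL ℝ ξ‖ ≤ ‖innerSL ℝ ξ‖ + ‖innerSL ℝ ξ‖ := norm_add_le _ _
    _ ≤ 2 * ‖ξ‖ := by rw [innerSL_apply_norm (𝕜 := ℝ) ξ]; linarith

lemma q_iter2 (ξ : EE) : ‖iteratedFDeriv ℝ 2 (fun ζ : EE => ‖ζ‖^2) ξ‖ ≤ 2 := by
  have h1 : ‖iteratedFDeriv ℝ 2 (fun ζ : EE => ‖ζ‖^2) ξ‖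
      = ‖iteratedFDeriv ℝ 1 (fderiv ℝ (fun ζ : EE => ‖ζ‖^2)) ξ‖ :=
    (norm_iteratedFDeriv_fderiv (n := 1)).symm
  rw [h1, q_fderiv, ← norm_iteratedFDeriv_fderiv, norm_iteratedFDeriv_zero,
    ContinuousLinearMap.fderiv, two_smul]
  calc ‖(innerSL ℝ : EE →L[ℝ] EE →L[ℝ] ℝ) + innerSL ℝ‖
      ≤ ‖(innerSL ℝ : EE →L[ℝ] EE →L[ℝ] ℝ)‖ + ‖(innerSL ℝ : EE →L[ℝ] EE →L[ℝ] ℝ)‖ :=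
        norm_add_le (E := EE →L[ℝ] EE →L[ℝ] ℝ) _ _
    _ ≤ 2 := by have := norm_innerSL_le (𝕜 := ℝ) (E := EE); linarith

lemma q_iter_ge3 (ξ : EE) (i : ℕ) (hi : 3 ≤ i) :
    ‖iteratedFDeriv ℝ i (fun ζ : EE => ‖ζ‖^2) ξ‖ = 0 := by
  obtain ⟨m, rfl⟩ : ∃ m, i = m + 3 := ⟨i - 3, by omega⟩
  have h1 : ‖iteratedFDeriv ℝ (m+3) (fun ζ : EE => ‖ζ‖^2) ξ‖
      = ‖iteratedFDeriv ℝ (m+2) (fderiv ℝ (fun ζ : EE => ‖ζ‖^2)) ξ‖ :=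
    (norm_iteratedFDeriv_fderiv (n := m+2)).symm
  rw [h1, q_fderiv]
  have h2 : ‖iteratedFDeriv ℝ (m+2) (⇑((2:ℕ) • (innerSL ℝ : EE →L[ℝ] EE →L[ℝ] ℝ))) ξ‖
      = ‖iteratedFDeriv ℝ (m+1)
          (fderiv ℝ (⇑((2:ℕ) • (innerSL ℝ : EE →L[ℝ] EE →L[ℝ] ℝ)))) ξ‖ :=
    (norm_iteratedFDeriv_fderiv (n := m+1)).symm
  rw [h2]
  have h3 : (fderiv ℝ (⇑((2:ℕ) • (innerSL ℝ : EE →L[ℝ] EE →L[ℝ] ℝ))))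
      = fun _ : EE => ((2:ℕ) • (innerSL ℝ : EE →L[ℝ] EE →L[ℝ] ℝ)) := by
    funext z; exact ContinuousLinearMap.fderiv _
  rw [h3, iteratedFDeriv_const_of_ne (Nat.succ_ne_zero m)]
  simp

end Euclid

lemma norm_pos_of_U {n : ℕ} (hσ : 1 < σ) {ξ : EuclideanSpace ℝ (Fin n)} (hξ : 4 < rr σ ξ) :
    0 < ‖ξ‖ := by
  by_contra hc
  have h0 : ‖ξ‖ = 0 := le_antisymm (not_lt.mp hc) (norm_nonneg ξ)
  have h2σ : (2*σ) ≠ 0 := by positivity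
  rw [rr, h0, Real.zero_rpow h2σ] at hξ
  linarith

lemma rr_eq_sq {n : ℕ} (σ : ℝ) (ξ : EuclideanSpace ℝ (Fin n)) :
    ((‖ξ‖^2 : ℝ)) ^ σ = rr σ ξ := by
  rw [rr, ← Real.rpow_natCast ‖ξ‖ 2, ← Real.rpow_mul (norm_nonneg ξ)]
  norm_num

lemma normb_eq {n : ℕ} (b : ℝ) (ξ : EuclideanSpace ℝ (Fin n)) :
    ((‖ξ‖^2 : ℝ)) ^ (b/2) = ‖ξ‖ ^ b := by
  rw [← Real.rpow_natCast ‖ξ‖ 2, ← Real.rpow_mul (norm_nonneg ξ)]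
  congr 1
  push_cast
  ring

lemma mem_Om_of_U (hσ : 1 < σ) {n : ℕ} {ξ : EuclideanSpace ℝ (Fin n)} (hξ : 4 < rr σ ξ) :
    (‖ξ‖^2 : ℝ) ∈ Om σ := by
  have hρ := norm_pos_of_U hσ hξ
  exact mem_Om_of_rpow hσ (by positivity) (by rw [rr_eq_sq]; exact hξ)

lemma fun_eq (hσ : 1 < σ) {n : ℕ} (b : ℝ) (j : ℕ) (t : ℝ) {ξ : EuclideanSpace ℝ (Fin n)}
    (hξ : 4 < rr σ ξ) :
    lam1R σ ξ * Real.exp (lam2R σ ξ * t) * lam2R σ ξ ^ j * ‖ξ‖ ^ b / (lam1R σ ξ - lam2R σ ξ)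
      = Gf σ b j t (‖ξ‖^2) := by
  have h1 : l1f σ (‖ξ‖^2) = lam1R σ ξ := by
    simp only [l1f, lam1R]; rw [rr_eq_sq]
  have h2 : l2f σ (‖ξ‖^2) = lam2R σ ξ := by
    simp only [l2f, lam2R]; rw [rr_eq_sq]
  rw [Gf, h1, h2, normb_eq]
end S10

/-- estimate (2.1.14), `|∂^α(λ₁ e^{λ₂ t} λ₂^j |ξ|^b/(λ₁−λ₂))| ≲ e^{−ct}|ξ|^{2σj+b−2σ−|α|}`. -/
theorem stmt_10 (σ : ℝ) (hσ : 1 < σ) (n : ℕ) (hn : 1 ≤ n) (b : ℝ) (j k : ℕ) :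
    ∃ C c : ℝ, 0 < C ∧ 0 < c ∧
      ∀ (t : ℝ), 0 < t → ∀ ξ : EuclideanSpace ℝ (Fin n), 5 ≤ ‖ξ‖ ^ (2 * σ) →
        ‖iteratedFDerivWithin ℝ k
            (fun ξ : EuclideanSpace ℝ (Fin n) =>
              lam1R σ ξ * Real.exp (lam2R σ ξ * t) * lam2R σ ξ ^ j * ‖ξ‖ ^ b /
                (lam1R σ ξ - lam2R σ ξ))
            {ξ : EuclideanSpace ℝ (Fin n) | 4 < rr σ ξ} ξ‖ ≤
          C * Real.exp (-c * t) * ‖ξ‖ ^ (2 * σ * j + b - 2 * σ - k) := by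
  obtain ⟨C0, ε0, hC0, hε0, hG⟩ := (S10.dsy_G hσ b j).upto hσ k
  refine ⟨(k.factorial : ℝ) * C0 * 2^k, 5 * ε0, by positivity, by positivity, ?_⟩
  intro t ht ξ h5
  have h5' : 5 ≤ rr σ ξ := h5
  have hξU4 : 4 < rr σ ξ := by linarith
  have hξU : ξ ∈ {ζ : EuclideanSpace ℝ (Fin n) | 4 < rr σ ζ} := hξU4
  have hρ : 0 < ‖ξ‖ := S10.norm_pos_of_U hσ hξU4
  have hsq : (0:ℝ) < ‖ξ‖^2 := by positivity
  have hsmem : (‖ξ‖^2 : ℝ) ∈ S10.Om σ := S10.mem_Om_of_U hσ hξU4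
  have hs5 : 5 ≤ ((‖ξ‖^2 : ℝ))^σ := by rw [S10.rr_eq_sq]; exact h5'
  have hUopen : IsOpen {ζ : EuclideanSpace ℝ (Fin n) | 4 < rr σ ζ} := by
    have hcont : Continuous fun ζ : EuclideanSpace ℝ (Fin n) => rr σ ζ := by
      simp only [rr]
      exact continuous_norm.rpow_const (fun ζ => Or.inr (by positivity))
    exact isOpen_lt continuous_const hcont
  have hTopen : IsOpen ((fun y : ℝ => ‖ξ‖^2 * y) ⁻¹' (S10.Om σ)) :=
    S10.isOpen_Om.preimage (continuous_const.mul continuous_id)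
  have hGt : ContDiffOn ℝ ∞ (S10.Gf σ b j t) (S10.Om σ) := (S10.dsy_G hσ b j).1 t ht
  have hMapsG : Set.MapsTo (fun y : ℝ => ‖ξ‖^2 * y)
      ((fun y : ℝ => ‖ξ‖^2 * y) ⁻¹' (S10.Om σ)) (S10.Om σ) := fun y hy => hy
  have hgCD : ContDiffOn ℝ ∞ (fun s' : ℝ => S10.Gf σ b j t (‖ξ‖^2 * s'))
      ((fun y : ℝ => ‖ξ‖^2 * y) ⁻¹' (S10.Om σ)) :=
    hGt.comp ((contDiff_const.mul contDiff_id).contDiffOn) hMapsG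
  have hqmCD : ContDiff ℝ ∞ (fun ζ : EuclideanSpace ℝ (Fin n) => (‖ξ‖^2)⁻¹ * ‖ζ‖^2) :=
    contDiff_const.mul (contDiff_norm_sq ℝ)
  have hqmxi : (‖ξ‖^2)⁻¹ * ‖ξ‖^2 = 1 := inv_mul_cancel₀ (ne_of_gt hsq)
  have hmapsq : Set.MapsTo (fun ζ : EuclideanSpace ℝ (Fin n) => (‖ξ‖^2)⁻¹ * ‖ζ‖^2)
      {ζ : EuclideanSpace ℝ (Fin n) | 4 < rr σ ζ}
      ((fun y : ℝ => ‖ξ‖^2 * y) ⁻¹' (S10.Om σ)) := by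
    intro ζ hζ
    show ‖ξ‖^2 * ((‖ξ‖^2)⁻¹ * ‖ζ‖^2) ∈ S10.Om σ
    have hcan : ‖ξ‖^2 * ((‖ξ‖^2)⁻¹ * ‖ζ‖^2) = ‖ζ‖^2 := by field_simp
    rw [hcan]
    exact S10.mem_Om_of_U hσ hζ
  have hfeq : Set.EqOn (fun ζ : EuclideanSpace ℝ (Fin n) =>
      lam1R σ ζ * Real.exp (lam2R σ ζ * t) * lam2R σ ζ ^ j * ‖ζ‖ ^ b /
        (lam1R σ ζ - lam2R σ ζ))
      ((fun s' : ℝ => S10.Gf σ b j t (‖ξ‖^2 * s')) ∘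
        (fun ζ : EuclideanSpace ℝ (Fin n) => (‖ξ‖^2)⁻¹ * ‖ζ‖^2))
      {ζ : EuclideanSpace ℝ (Fin n) | 4 < rr σ ζ} := by
    intro ζ hζ
    have hcan : ‖ξ‖^2 * ((‖ξ‖^2)⁻¹ * ‖ζ‖^2) = ‖ζ‖^2 := by field_simp
    show lam1R σ ζ * Real.exp (lam2R σ ζ * t) * lam2R σ ζ ^ j * ‖ζ‖ ^ b /
        (lam1R σ ζ - lam2R σ ζ) = S10.Gf σ b j t (‖ξ‖^2 * ((‖ξ‖^2)⁻¹ * ‖ζ‖^2))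
    rw [hcan]
    exact S10.fun_eq hσ b j t hζ
  have h1T : (1:ℝ) ∈ (fun y : ℝ => ‖ξ‖^2 * y) ⁻¹' (S10.Om σ) := by
    show ‖ξ‖^2 * 1 ∈ S10.Om σ
    rw [mul_one]; exact hsmem
  -- outer derivative bounds
  have hC : ∀ i, i ≤ k → ‖iteratedFDerivWithin ℝ i (fun s' : ℝ => S10.Gf σ b j t (‖ξ‖^2 * s'))
      ((fun y : ℝ => ‖ξ‖^2 * y) ⁻¹' (S10.Om σ))
      ((fun ζ : EuclideanSpace ℝ (Fin n) => (‖ξ‖^2)⁻¹ * ‖ζ‖^2) ξ)‖ ≤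
      C0 * ‖ξ‖ ^ (2*σ*(j:ℝ) + b - 2*σ) * Real.exp (-(5*ε0*t)) := by
    intro i hik
    have hat : (fun ζ : EuclideanSpace ℝ (Fin n) => (‖ξ‖^2)⁻¹ * ‖ζ‖^2) ξ = 1 := hqmxi
    rw [hat, norm_iteratedFDerivWithin_eq_norm_iteratedDerivWithin, Real.norm_eq_abs]
    have hscale := S10.iteratedDerivWithin_scale S10.isOpen_Om hGt (‖ξ‖^2) i 1
      (by rw [mul_one]; exact hsmem)
    rw [hscale, mul_one]
    have hb1 := hG i hik t ht (‖ξ‖^2) hsmem hs5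
    have habs : |(‖ξ‖^2:ℝ)^i * iteratedDerivWithin i (S10.Gf σ b j t) (S10.Om σ) (‖ξ‖^2)|
        = (‖ξ‖^2:ℝ)^i * |iteratedDerivWithin i (S10.Gf σ b j t) (S10.Om σ) (‖ξ‖^2)| := by
      rw [abs_mul, abs_pow, abs_of_pos hsq]
    rw [habs]
    have ecomb : ((‖ξ‖^2:ℝ))^i * (‖ξ‖^2:ℝ) ^ ((σ*(j:ℝ) + b/2 - σ) - (i:ℝ)) =
        ‖ξ‖ ^ (2*σ*(j:ℝ) + b - 2*σ) := by
      rw [← Real.rpow_natCast (‖ξ‖^2 : ℝ) i, ← Real.rpow_add hsq,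
        show (i:ℝ) + ((σ*(j:ℝ) + b/2 - σ) - (i:ℝ)) = σ*(j:ℝ) + b/2 - σ from by ring,
        ← Real.rpow_natCast ‖ξ‖ 2, ← Real.rpow_mul (le_of_lt hρ)]
      congr 1
      push_cast
      ring
    calc (‖ξ‖^2:ℝ)^i * |iteratedDerivWithin i (S10.Gf σ b j t) (S10.Om σ) (‖ξ‖^2)|
        ≤ (‖ξ‖^2:ℝ)^i * (C0 * (‖ξ‖^2:ℝ) ^ ((σ*(j:ℝ) + b/2 - σ) - (i:ℝ)) *
            Real.exp (-(ε0 * ((‖ξ‖^2:ℝ)^σ * t)))) := by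
          apply mul_le_mul_of_nonneg_left hb1 (by positivity)
      _ = C0 * (((‖ξ‖^2:ℝ))^i * (‖ξ‖^2:ℝ) ^ ((σ*(j:ℝ) + b/2 - σ) - (i:ℝ))) *
            Real.exp (-(ε0 * ((‖ξ‖^2:ℝ)^σ * t))) := by ring
      _ = C0 * ‖ξ‖ ^ (2*σ*(j:ℝ) + b - 2*σ) * Real.exp (-(ε0 * ((‖ξ‖^2:ℝ)^σ * t))) := by
          rw [ecomb]
      _ ≤ C0 * ‖ξ‖ ^ (2*σ*(j:ℝ) + b - 2*σ) * Real.exp (-(5*ε0*t)) := by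
          have hle : 5*ε0*t ≤ ε0 * ((‖ξ‖^2:ℝ)^σ * t) := by
            have h0 : 0 ≤ ε0 * t * ((‖ξ‖^2:ℝ)^σ - 5) :=
              mul_nonneg (mul_nonneg (le_of_lt hε0) (le_of_lt ht)) (by linarith)
            nlinarith [h0]
          have := Real.exp_le_exp.2 (neg_le_neg hle)
          apply mul_le_mul_of_nonneg_left this (by positivity)
  -- inner derivative bounds
  have hD : ∀ i, 1 ≤ i → i ≤ k →
      ‖iteratedFDerivWithin ℝ i (fun ζ : EuclideanSpace ℝ (Fin n) => (‖ξ‖^2)⁻¹ * ‖ζ‖^2)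
        {ζ : EuclideanSpace ℝ (Fin n) | 4 < rr σ ζ} ξ‖ ≤ (2/‖ξ‖)^i := by
    intro i hi1 hik
    rw [iteratedFDerivWithin_of_isOpen i hUopen hξU]
    have hsmul0 : iteratedFDeriv ℝ i
        ((‖ξ‖^2)⁻¹ • (fun ζ : EuclideanSpace ℝ (Fin n) => ‖ζ‖^2)) ξ
        = (‖ξ‖^2)⁻¹ • iteratedFDeriv ℝ i
            (fun ζ : EuclideanSpace ℝ (Fin n) => ‖ζ‖^2) ξ :=
      iteratedFDeriv_const_smul_apply (contDiff_norm_sq ℝ).contDiffAt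
    have hfun : (fun ζ : EuclideanSpace ℝ (Fin n) => (‖ξ‖^2)⁻¹ * ‖ζ‖^2)
        = ((‖ξ‖^2)⁻¹ • (fun ζ : EuclideanSpace ℝ (Fin n) => ‖ζ‖^2)) := rfl
    rw [hfun, hsmul0, norm_smul, Real.norm_eq_abs, abs_of_pos (inv_pos.2 hsq)]
    have hcases : i = 1 ∨ i = 2 ∨ 3 ≤ i := by omega
    rcases hcases with rfl | rfl | h3
    · calc (‖ξ‖^2)⁻¹ * ‖iteratedFDeriv ℝ 1 (fun ζ : EuclideanSpace ℝ (Fin n) => ‖ζ‖^2) ξ‖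
          ≤ (‖ξ‖^2)⁻¹ * (2*‖ξ‖) :=
            mul_le_mul_of_nonneg_left (S10.q_iter1 ξ) (by positivity)
        _ ≤ (2/‖ξ‖)^1 := by
            rw [pow_one]
            apply le_of_eq
            field_simp
    · calc (‖ξ‖^2)⁻¹ * ‖iteratedFDeriv ℝ 2 (fun ζ : EuclideanSpace ℝ (Fin n) => ‖ζ‖^2) ξ‖
          ≤ (‖ξ‖^2)⁻¹ * 2 :=
            mul_le_mul_of_nonneg_left (S10.q_iter2 ξ) (by positivity)
        _ ≤ (2/‖ξ‖)^2 := by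
            rw [div_pow]
            rw [div_eq_mul_inv]
            have h4 : (2:ℝ)^2 = 4 := by norm_num
            rw [h4]
            nlinarith [inv_pos.2 hsq]
    · rw [S10.q_iter_ge3 ξ i h3]
      have : (0:ℝ) < (2/‖ξ‖)^i := by positivity
      nlinarith
  -- composition
  have key := norm_iteratedFDerivWithin_comp_le (𝕜 := ℝ)
    (g := fun s' : ℝ => S10.Gf σ b j t (‖ξ‖^2 * s'))
    (f := fun ζ : EuclideanSpace ℝ (Fin n) => (‖ξ‖^2)⁻¹ * ‖ζ‖^2) (n := k)
    (s := {ζ : EuclideanSpace ℝ (Fin n) | 4 < rr σ ζ})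
    (t := (fun y : ℝ => ‖ξ‖^2 * y) ⁻¹' (S10.Om σ)) (x := ξ) (N := ∞)
    hgCD (hqmCD.contDiffOn (s := {ζ : EuclideanSpace ℝ (Fin n) | 4 < rr σ ζ}))
    (S10.natCast_le_infty k) hTopen.uniqueDiffOn hUopen.uniqueDiffOn
    hmapsq hξU hC hD
  have hrw := iteratedFDerivWithin_congr (𝕜 := ℝ) hfeq hξU k
  calc ‖iteratedFDerivWithin ℝ k
        (fun ζ : EuclideanSpace ℝ (Fin n) =>
          lam1R σ ζ * Real.exp (lam2R σ ζ * t) * lam2R σ ζ ^ j * ‖ζ‖ ^ b /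
            (lam1R σ ζ - lam2R σ ζ))
        {ζ : EuclideanSpace ℝ (Fin n) | 4 < rr σ ζ} ξ‖
      = ‖iteratedFDerivWithin ℝ k
        ((fun s' : ℝ => S10.Gf σ b j t (‖ξ‖^2 * s')) ∘
          (fun ζ : EuclideanSpace ℝ (Fin n) => (‖ξ‖^2)⁻¹ * ‖ζ‖^2))
        {ζ : EuclideanSpace ℝ (Fin n) | 4 < rr σ ζ} ξ‖ := by rw [hrw]
    _ ≤ (k.factorial : ℝ) * (C0 * ‖ξ‖ ^ (2*σ*(j:ℝ) + b - 2*σ) * Real.exp (-(5*ε0*t)))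
          * (2/‖ξ‖)^k := key
    _ = (k.factorial : ℝ) * C0 * 2^k * Real.exp (-(5*ε0) * t) *
          ‖ξ‖ ^ (2 * σ * j + b - 2 * σ - k) := by
        have e4 : (2/‖ξ‖:ℝ)^k = 2^k * ‖ξ‖ ^ (-(k:ℝ)) := by
          rw [div_pow, ← Real.rpow_natCast ‖ξ‖ k, div_eq_mul_inv,
            ← Real.rpow_neg (le_of_lt hρ)]
        have e5 : ‖ξ‖ ^ (2*σ*(j:ℝ) + b - 2*σ) * ‖ξ‖ ^ (-(k:ℝ))
            = ‖ξ‖ ^ (2 * σ * j + b - 2 * σ - k) := by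
          rw [← Real.rpow_add hρ]; congr 1 <;> ring
        rw [e4, show (-(5*ε0) * t : ℝ) = -(5*ε0*t) from by ring, ← e5]
        ring
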